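/- Let p be a non-zero polynomial on ℂⁿ and F an entire function. If the product pF is of exponential type (i.e., there exist A > 0 and M ≥ 0 with |p(z)F(z)| ≤ M e^{A|z|} for all z), then F itself is of exponential type (i.e., there exist A' > 0 and M' ≥ 0 with |F(z)| ≤ M' e^{A'|z|} for all z). -/

import Mathlib

/-- The Euclidean norm on ℂⁿ. -/
noncomputable def enorm' {n : ℕ} (z : Fin n → ℂ) : ℝ :=
  Real.sqrt (∑ i, ‖z i‖ ^ 2)

/-- A function on ℂⁿ is of exponential type. -/
def ExpType {n : ℕ} (f : (Fin n → ℂ) → ℂ) : Prop :=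
  ∃ A > (0:ℝ), ∃ M ≥ (0:ℝ), ∀ z, ‖f z‖ ≤ M * Real.exp (A * enorm' z)

lemma enorm'_eq_norm {n : ℕ} (z : Fin n → ℂ) :
    enorm' z = ‖(WithLp.equiv 2 (Fin n → ℂ)).symm z‖ := by
  rw [EuclideanSpace.norm_eq]
  simp [enorm']

lemma enorm'_nonneg {n : ℕ} (z : Fin n → ℂ) : 0 ≤ enorm' z :=
  Real.sqrt_nonneg _

lemma enorm'_line_le {n : ℕ} (z e : Fin n → ℂ) (t : ℂ) :
    enorm' (fun i => z i + t * e i) ≤ enorm' z + ‖t‖ * enorm' e := by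
  have h : (fun i => z i + t * e i) = z + t • e := by
    funext i; simp [Pi.smul_apply, smul_eq_mul]
  rw [h, enorm'_eq_norm, enorm'_eq_norm, enorm'_eq_norm]
  rw [show (WithLp.equiv 2 (Fin n → ℂ)).symm (z + t • e)
      = (WithLp.equiv 2 (Fin n → ℂ)).symm z + t • (WithLp.equiv 2 (Fin n → ℂ)).symm e by
    rfl]
  calc ‖(WithLp.equiv 2 (Fin n → ℂ)).symm z + t • (WithLp.equiv 2 (Fin n → ℂ)).symm e‖
      ≤ ‖(WithLp.equiv 2 (Fin n → ℂ)).symm z‖ + ‖t • (WithLp.equiv 2 (Fin n → ℂ)).symm e‖ :=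
        norm_add_le _ _
    _ = _ := by simp [norm_smul]

private lemma coeff_prod_eq {ι : Type*} (s : Finset ι) (f : ι → Polynomial ℂ) (k : ι → ℕ)
    (h : ∀ i ∈ s, (f i).natDegree ≤ k i) :
    (∏ i ∈ s, f i).coeff (∑ i ∈ s, k i) = ∏ i ∈ s, (f i).coeff (k i) := by
  classical
  induction s using Finset.cons_induction with
  | empty => simp
  | cons a s ha ih =>
    rw [Finset.prod_cons, Finset.sum_cons,
      Polynomial.coeff_mul_add_eq_of_natDegree_le (h a (Finset.mem_cons_self a s))
        ((Polynomial.natDegree_prod_le s f).trans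
          (Finset.sum_le_sum fun i hi => h i (Finset.mem_cons_of_mem hi))),
      ih fun i hi => h i (Finset.mem_cons_of_mem hi), Finset.prod_cons]

/-- The restriction of a multivariate polynomial to the line `z + t e`. -/
noncomputable def lineP {n : ℕ} (p : MvPolynomial (Fin n) ℂ) (e z : Fin n → ℂ) :
    Polynomial ℂ :=
  MvPolynomial.aeval (fun i => Polynomial.C (z i) + Polynomial.C (e i) * Polynomial.X) p

lemma lineP_eval {n : ℕ} (p : MvPolynomial (Fin n) ℂ) (e z : Fin n → ℂ) (t : ℂ) :
    (lineP p e z).eval t = MvPolynomial.eval (fun i => z i + t * e i) p := by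
  induction p using MvPolynomial.induction_on with
  | C a => simp [lineP]
  | add q r hq hr =>
      simp only [lineP, map_add, Polynomial.eval_add] at *
      rw [hq, hr]
  | mul_X q i hq =>
      simp only [lineP, map_mul, Polynomial.eval_mul, MvPolynomial.aeval_X,
        MvPolynomial.eval_mul, MvPolynomial.eval_X, Polynomial.eval_add,
        Polynomial.eval_C, Polynomial.eval_mul, Polynomial.eval_X] at *
      rw [hq]; ring

lemma lineP_natDegree_le {n : ℕ} (p : MvPolynomial (Fin n) ℂ) (e z : Fin n → ℂ) :
    (lineP p e z).natDegree ≤ p.totalDegree := by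
  classical
  rw [lineP, MvPolynomial.aeval_def, MvPolynomial.eval₂_eq']
  simp only [Polynomial.algebraMap_eq]
  apply Polynomial.natDegree_sum_le_of_forall_le
  intro m hm
  refine (Polynomial.natDegree_mul_le).trans ?_
  rw [Polynomial.natDegree_C, zero_add]
  refine (Polynomial.natDegree_prod_le _ _).trans ?_
  have h1 : ∀ i : Fin n,
      ((Polynomial.C (z i) + Polynomial.C (e i) * Polynomial.X) ^ m i).natDegree ≤ m i := by
    intro i
    refine (Polynomial.natDegree_pow_le).trans ?_
    have : (Polynomial.C (z i) + Polynomial.C (e i) * Polynomial.X).natDegree ≤ 1 := by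
      refine (Polynomial.natDegree_add_le _ _).trans ?_
      simp [Polynomial.natDegree_C]
      exact Polynomial.natDegree_C_mul_le _ _ |>.trans (by simp)
    calc m i * (Polynomial.C (z i) + Polynomial.C (e i) * Polynomial.X).natDegree
        ≤ m i * 1 := Nat.mul_le_mul_left _ this
      _ = m i := mul_one _
  refine (Finset.sum_le_sum fun i _ => h1 i).trans ?_
  have : ∑ i, m i = m.sum fun _ k => k := by
    rw [Finsupp.sum_fintype]; intro i; rfl
  rw [this]
  exact MvPolynomial.le_totalDegree hm

lemma lineP_coeff_top {n : ℕ} (p : MvPolynomial (Fin n) ℂ) (e z : Fin n → ℂ) :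
    (lineP p e z).coeff p.totalDegree
      = MvPolynomial.eval e (MvPolynomial.homogeneousComponent p.totalDegree p) := by
  classical
  set d := p.totalDegree with hd
  rw [lineP, MvPolynomial.aeval_def, MvPolynomial.eval₂_eq', Polynomial.finset_sum_coeff]
  simp only [Polynomial.algebraMap_eq]
  rw [MvPolynomial.homogeneousComponent_apply, map_sum]
  rw [Finset.sum_filter]
  apply Finset.sum_congr rfl
  intro m hm
  have hdeg : ∀ i : Fin n,
      ((Polynomial.C (z i) + Polynomial.C (e i) * Polynomial.X) ^ m i).natDegree ≤ m i := by
    intro i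
    refine (Polynomial.natDegree_pow_le).trans ?_
    have : (Polynomial.C (z i) + Polynomial.C (e i) * Polynomial.X).natDegree ≤ 1 := by
      refine (Polynomial.natDegree_add_le _ _).trans ?_
      simp [Polynomial.natDegree_C]
      exact Polynomial.natDegree_C_mul_le _ _ |>.trans (by simp)
    calc m i * _ ≤ m i * 1 := Nat.mul_le_mul_left _ this
      _ = m i := mul_one _
  have hmsum : ∑ i, m i = m.degree := by
    rw [Finsupp.degree]
    exact (Finset.sum_subset (Finset.subset_univ _)
      (fun i _ hi => by simpa using Finsupp.notMem_support_iff.mp hi)).symm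
  have hmle : m.degree ≤ d := by
    rw [← hmsum]
    have : ∑ i, m i = m.sum fun _ k => k := by rw [Finsupp.sum_fintype]; intro i; rfl
    rw [this]; exact MvPolynomial.le_totalDegree hm
  by_cases hcase : m.degree = d
  · rw [if_pos hcase, Polynomial.coeff_C_mul]
    rw [show d = ∑ i, m i by rw [hmsum, hcase]]
    rw [coeff_prod_eq _ _ _ (fun i _ => hdeg i)]
    have : ∀ i : Fin n,
        ((Polynomial.C (z i) + Polynomial.C (e i) * Polynomial.X) ^ m i).coeff (m i)
          = e i ^ m i := by
      intro i
      have h1 : (Polynomial.C (z i) + Polynomial.C (e i) * Polynomial.X).natDegree ≤ 1 := by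
        refine (Polynomial.natDegree_add_le _ _).trans ?_
        simp [Polynomial.natDegree_C]
        exact Polynomial.natDegree_C_mul_le _ _ |>.trans (by simp)
      have := Polynomial.coeff_pow_of_natDegree_le (p := Polynomial.C (z i)
        + Polynomial.C (e i) * Polynomial.X) (n := 1) (m := m i) h1
      rw [mul_one] at this
      rw [this]
      congr 1
      simp
    rw [Finset.prod_congr rfl fun i _ => this i, MvPolynomial.eval_monomial]
    rw [Finsupp.prod_fintype _ _ (fun i => pow_zero (e i))]
  · rw [if_neg hcase]
    have hlt : m.degree < d := lt_of_le_of_ne hmle hcase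
    rw [Polynomial.coeff_C_mul]
    rw [Polynomial.coeff_eq_zero_of_natDegree_lt, mul_zero]
    calc (∏ i, (Polynomial.C (z i) + Polynomial.C (e i) * Polynomial.X) ^ m i).natDegree
        ≤ ∑ i, m i := (Polynomial.natDegree_prod_le _ _).trans
          (Finset.sum_le_sum fun i _ => hdeg i)
      _ = m.degree := hmsum
      _ < d := hlt

private lemma round_eq_of_abs_sub_lt_half {x : ℝ} {k : ℤ} (h : |x - k| < 1/2) :
    round x = k := by
  rw [round_eq, Int.floor_eq_iff]
  have := abs_lt.mp h
  constructor <;> linarith [this.1, this.2]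

private lemma exists_good_radius (d : ℕ) (R : Multiset ℂ) (hcard : Multiset.card R ≤ d) :
    ∃ r : ℝ, 1 ≤ r ∧ r ≤ d + 1 ∧ ∀ ρ ∈ R, (1/2 : ℝ) ≤ |r - ‖ρ‖| := by
  classical
  set bad : Finset ℤ := R.toFinset.image fun ρ => round (‖ρ‖) with hbaddef
  have hbad : bad.card ≤ d :=
    le_trans Finset.card_image_le (le_trans (Multiset.toFinset_card_le R) hcard)
  have hlt : bad.card < (Finset.Icc (1:ℤ) (d+1)).card := by
    rw [Int.card_Icc]
    omega
  have : ¬ (Finset.Icc (1:ℤ) (d+1) ⊆ bad) := fun hsub =>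
    absurd (Finset.card_le_card hsub) (not_le.mpr hlt)
  obtain ⟨k, hk, hk2⟩ := Finset.not_subset.mp this
  rw [Finset.mem_Icc] at hk
  refine ⟨(k:ℝ), by exact_mod_cast hk.1, by exact_mod_cast hk.2, ?_⟩
  intro ρ hρ
  by_contra hcon
  push_neg at hcon
  apply hk2
  refine Finset.mem_image.2 ⟨ρ, Multiset.mem_toFinset.2 hρ, ?_⟩
  apply round_eq_of_abs_sub_lt_half
  rw [abs_sub_comm]
  exact hcon

private lemma prod_abs_ge {R : Multiset ℂ} {t : ℂ}
    (h : ∀ ρ ∈ R, (1/2 : ℝ) ≤ ‖t - ρ‖) :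
    (1/2 : ℝ) ^ Multiset.card R ≤ (R.map fun ρ => ‖t - ρ‖).prod := by
  induction R using Multiset.induction with
  | empty => simp
  | cons a s ih =>
    simp only [Multiset.map_cons, Multiset.prod_cons, Multiset.card_cons, pow_succ]
    rw [mul_comm ((1/2:ℝ)^Multiset.card s)]
    exact mul_le_mul (h a (Multiset.mem_cons_self a s))
      (ih fun ρ hρ => h ρ (Multiset.mem_cons_of_mem hρ))
      (pow_nonneg (by norm_num) _) (norm_nonneg _)

theorem stmt_5 {n : ℕ} (p : MvPolynomial (Fin n) ℂ) (hp : p ≠ 0)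
    (F : (Fin n → ℂ) → ℂ) (hF : Differentiable ℂ F)
    (h : ExpType fun z => MvPolynomial.eval z p * F z) : ExpType F := by
  classical
  obtain ⟨A, hA, M, hM, hbound⟩ := h
  set d := p.totalDegree with hdd
  -- the top homogeneous component is nonzero
  have hhc : MvPolynomial.homogeneousComponent d p ≠ 0 := by
    have hsupp : p.support.Nonempty := by
      rwa [Finset.nonempty_iff_ne_empty, Ne, MvPolynomial.support_eq_empty]
    obtain ⟨m, hm, hmd⟩ := Finset.exists_mem_eq_sup p.support hsupp
      (fun s => s.sum fun _ e => e)
    intro hc0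
    have : MvPolynomial.coeff m (MvPolynomial.homogeneousComponent d p) = 0 := by
      rw [hc0]; simp
    rw [MvPolynomial.coeff_homogeneousComponent] at this
    have hdeg : m.degree = d := by
      rw [hdd, MvPolynomial.totalDegree, hmd, Finsupp.degree, Finsupp.sum]
      rfl
    rw [if_pos hdeg] at this
    exact MvPolynomial.mem_support_iff.mp hm this
  -- a direction where it does not vanish
  obtain ⟨e, he⟩ : ∃ e, MvPolynomial.eval e (MvPolynomial.homogeneousComponent d p) ≠ 0 := by
    by_contra hcon
    push_neg at hcon
    exact hhc (MvPolynomial.funext fun x => by simp [hcon x])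
  set c := MvPolynomial.eval e (MvPolynomial.homogeneousComponent d p) with hc
  have hcabs : 0 < ‖c‖ := by
    simpa using he
  set N := enorm' e with hN
  refine ⟨A, hA, M * Real.exp (A * ((d+1) * N)) * 2^d / ‖c‖, ?_, ?_⟩
  · positivity
  intro z
  -- the one-variable polynomial along the line through z in direction e
  set Q := lineP p e z with hQ
  have hQd : Q.natDegree = d := by
    refine le_antisymm (lineP_natDegree_le p e z) ?_
    exact Polynomial.le_natDegree_of_ne_zero (by rw [hQ, lineP_coeff_top]; exact he)
  have hQne : Q ≠ 0 := fun h0 => by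
    have := lineP_coeff_top p e z
    rw [← hQ, h0] at this
    simp at this
    exact he this.symm
  have hQlead : Q.leadingCoeff = c := by
    rw [Polynomial.leadingCoeff, hQd, hQ, lineP_coeff_top]
  have hroots : Multiset.card Q.roots = d := by
    rw [← hQd]
    exact Polynomial.splits_iff_card_roots.mp (IsAlgClosed.splits Q)
  -- pick a good radius
  obtain ⟨r, hr1, hrle, hrgood⟩ := exists_good_radius d Q.roots (le_of_eq hroots)
  have hr0 : (0:ℝ) < r := lt_of_lt_of_le one_pos hr1
  -- lower bound for |Q| on the circle of radius r
  have hQlow : ∀ t : ℂ, ‖t‖ = r →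
      ‖c‖ * (1/2)^d ≤ ‖Q.eval t‖ := by
    intro t ht
    have hsplit := (IsAlgClosed.splits Q).eq_prod_roots
    rw [hQlead] at hsplit
    have : Q.eval t = c * ((Q.roots.map fun ρ => t - ρ).prod) := by
      conv_lhs => rw [hsplit]
      simp [Polynomial.eval_multiset_prod, Multiset.map_map, Function.comp]
    have habs : ‖(Q.roots.map fun ρ => t - ρ).prod‖
        = ((Q.roots.map fun ρ => ‖t - ρ‖).prod) := by
      rw [show ‖(Q.roots.map fun ρ => t - ρ).prod‖ = normHom (Q.roots.map fun ρ => t - ρ).prod from rfl,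
        map_multiset_prod, Multiset.map_map]; rfl
    rw [this, norm_mul, habs]
    refine mul_le_mul_of_nonneg_left ?_ (norm_nonneg c)
    rw [← hroots]
    apply prod_abs_ge
    intro ρ hρ
    calc (1/2:ℝ) ≤ |r - ‖ρ‖| := hrgood ρ hρ
      _ = |‖t‖ - ‖ρ‖| := by rw [ht]
      _ = |‖t‖ - ‖ρ‖| := by rfl
      _ ≤ ‖t - ρ‖ := abs_norm_sub_norm_le t ρ
      _ = ‖t - ρ‖ := rfl
  -- the function along the line
  set φ : ℂ → ℂ := fun t => F (fun i => z i + t * e i) with hφ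
  have hφdiff : Differentiable ℂ φ := by
    apply hF.comp
    apply differentiable_pi.mpr
    intro i
    exact (differentiable_const _).add ((differentiable_id).mul (differentiable_const _))
  have hφ0 : φ 0 = F z := by
    simp [hφ]
  -- bound on the circle
  set C : ℝ := M * Real.exp (A * (enorm' z + (d+1) * N)) * 2^d / ‖c‖ with hC
  have hfront : ∀ t ∈ frontier (Metric.ball (0:ℂ) r), ‖φ t‖ ≤ C := by
    intro t htmem
    rw [frontier_ball (0:ℂ) (ne_of_gt hr0)] at htmem
    have ht : ‖t‖ = r := by
      simpa [Complex.dist_eq] using htmem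
    have hprod : Q.eval t * φ t = MvPolynomial.eval (fun i => z i + t * e i) p
        * F (fun i => z i + t * e i) := by
      rw [hQ, lineP_eval]
    have hup : ‖Q.eval t * φ t‖ ≤ M * Real.exp (A * (enorm' z + (d+1) * N)) := by
      rw [hprod]
      refine (hbound (fun i => z i + t * e i)).trans ?_
      apply mul_le_mul_of_nonneg_left _ hM
      apply Real.exp_le_exp.mpr
      apply mul_le_mul_of_nonneg_left _ (le_of_lt hA)
      refine (enorm'_line_le z e t).trans ?_
      have : ‖t‖ * N ≤ (d+1) * N := by
        apply mul_le_mul_of_nonneg_right _ (enorm'_nonneg e)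
        rw [ht]; exact hrle
      linarith
    have hL : (0:ℝ) < ‖c‖ * (1/2:ℝ)^d := by positivity
    have hQtpos : 0 < ‖Q.eval t‖ := lt_of_lt_of_le hL (hQlow t ht)
    have hphi : ‖φ t‖ = ‖Q.eval t * φ t‖ / ‖Q.eval t‖ := by
      rw [norm_mul, mul_comm, mul_div_assoc, div_self hQtpos.ne', mul_one]
    rw [hphi, hC]
    calc ‖Q.eval t * φ t‖ / ‖Q.eval t‖
        ≤ (M * Real.exp (A * (enorm' z + (d+1) * N))) / (‖c‖ * (1/2:ℝ)^d) :=
          div_le_div₀ (by positivity) hup hL (hQlow t ht)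
      _ = M * Real.exp (A * (enorm' z + (d+1) * N)) * 2^d / ‖c‖ := by
          rw [one_div, inv_pow, div_eq_mul_inv, mul_inv, inv_inv, div_eq_mul_inv]
          ring
  -- maximum modulus principle
  have hmax : ‖φ 0‖ ≤ C := by
    apply Complex.norm_le_of_forall_mem_frontier_norm_le Metric.isBounded_ball
      hφdiff.diffContOnCl hfront
    exact subset_closure (Metric.mem_ball_self hr0)
  rw [hφ0] at hmax
  refine hmax.trans (le_of_eq ?_)
  rw [hC]
  rw [mul_add, Real.exp_add]
  ring
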